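/- For m ≥ 10, let 𝒰_m be the set of r-tuples (k₁,…,k_r) with 2^{m−1} + m² < k₁ < ⋯ < k_r ≤ 2^m and k_{j+1} − k_j − 1 ≥ (m log 2)² for all 0 ≤ j ≤ r−1 (with k₀ = 1). Then the cardinality of 𝒰_m satisfies #𝒰_m = (2^{r(m−1)}/r!)(1 + o(1)) as m → ∞; in particular, for every ε > 0 there is M such that for all m ≥ M, (1−ε) 2^{r(m−1)}/r! ≤ #𝒰_m ≤ (1+ε) 2^{r(m−1)}/r!. -/

import Mathlib

open Filter

/-- The collection `𝒰_m` of `r`-tuples `2^{m-1} + m² < k₁ < ⋯ < k_r ≤ 2^m` whose consecutive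
gaps (including the gap from the initial position `k₀ = 1`) satisfy
`k_{j+1} - k_j - 1 ≥ (log 2^m)² = (m log 2)²`. -/
def Uset (r m : ℕ) : Set (Fin r → ℕ) :=
  {k | StrictMono k ∧ (∀ i : Fin r, k i ≤ 2 ^ m) ∧
    (∀ i : Fin r, (i : ℕ) = 0 → 2 ^ (m - 1) + m ^ 2 < k i ∧
      ((m : ℝ) * Real.log 2) ^ 2 ≤ (k i : ℝ) - 1 - 1) ∧
    ∀ i j : Fin r, (i : ℕ) + 1 = (j : ℕ) →
      ((m : ℝ) * Real.log 2) ^ 2 ≤ (k j : ℝ) - (k i : ℝ) - 1}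

lemma pow_le_descFactorial' (n : ℕ) : ∀ k : ℕ, (n + 1 - k) ^ k ≤ n.descFactorial k
  | 0 => le_refl 1
  | (k + 1) => by
    rw [Nat.descFactorial_succ]
    have e : n + 1 - (k + 1) = n - k := by omega
    have h1 : (n + 1 - (k + 1)) ^ (k + 1) = (n - k) * (n - k) ^ k := by
      rw [e, pow_succ']
    rw [h1]
    refine Nat.mul_le_mul_left _ ?_ |>.trans (Nat.mul_le_mul_right _ (le_refl (n - k)))
    calc (n - k) ^ k ≤ (n + 1 - k) ^ k := Nat.pow_le_pow_left (by omega) k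
      _ ≤ n.descFactorial k := pow_le_descFactorial' n k

lemma Uset_finite (r m : ℕ) : (Uset r m).Finite := by
  apply Set.Finite.subset (Set.Finite.pi (fun _ : Fin r => Set.finite_Iic (2 ^ m)))
  intro k hk
  rw [Set.mem_pi]
  intro i _
  exact hk.2.1 i

lemma card_upper (r m : ℕ) (hr : 1 ≤ r) :
    Nat.card (Uset r m) ≤ (2 ^ m - (2 ^ (m - 1) + m ^ 2)).choose r := by
  rw [Nat.card_coe_set_eq]
  have key := Set.ncard_le_ncard_of_injOn
      (s := Uset r m)
      (t := (↑(Finset.powersetCard r (Finset.Ioc (2 ^ (m - 1) + m ^ 2) (2 ^ m))) : Set (Finset ℕ)))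
      (fun k => Finset.image k Finset.univ) ?_ ?_ (Finset.finite_toSet _)
  · simpa [Set.ncard_coe_finset, Finset.card_powersetCard, Nat.card_Ioc] using key
  · intro k hk
    simp only [Finset.mem_coe, Finset.mem_powersetCard]
    constructor
    · intro x hx
      rcases Finset.mem_image.1 hx with ⟨i, -, rfl⟩
      rw [Finset.mem_Ioc]
      refine ⟨lt_of_lt_of_le ((hk.2.2.1 ⟨0, hr⟩ rfl).1) ?_, hk.2.1 i⟩
      exact hk.1.monotone (Fin.mk_le_of_le_val (Nat.zero_le _))
    · rw [Finset.card_image_of_injective _ hk.1.injective, Finset.card_univ, Fintype.card_fin]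
  · intro k hk k' hk' he
    simp only at he
    have hcard : (Finset.image k Finset.univ).card = r := by
      rw [Finset.card_image_of_injective _ hk.1.injective, Finset.card_univ, Fintype.card_fin]
    have e1 : k = (Finset.image k Finset.univ).orderEmbOfFin hcard :=
      Finset.orderEmbOfFin_unique hcard
        (fun x => Finset.mem_image_of_mem k (Finset.mem_univ x)) hk.1
    have e2 : k' = (Finset.image k Finset.univ).orderEmbOfFin hcard :=
      Finset.orderEmbOfFin_unique hcard
        (fun x => he ▸ Finset.mem_image_of_mem k' (Finset.mem_univ x)) hk'.1
    exact e1.trans e2.symm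

/-- The injection of `r`-subsets of `range (2^(m-1) - r*m^2)` into `Uset r m`. -/
def gfun (r m : ℕ) (s : Finset ℕ) : Fin r → ℕ :=
  if h : s.card = r then
    (fun i => 2 ^ (m - 1) + m ^ 2 + 1 + m ^ 2 * i + s.orderEmbOfFin h i)
  else fun _ => 0

lemma gfun_eq {r m : ℕ} {s : Finset ℕ} (h : s.card = r) :
    gfun r m s = fun i => 2 ^ (m - 1) + m ^ 2 + 1 + m ^ 2 * i + s.orderEmbOfFin h i :=
  dif_pos h

lemma card_lower (r m : ℕ) (hr : 1 ≤ r) (hm : 1 ≤ m)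
    (hN : r * m ^ 2 + r ≤ 2 ^ (m - 1)) :
    (2 ^ (m - 1) - r * m ^ 2).choose r ≤ Nat.card (Uset r m) := by
  have hlog0 : 0 ≤ Real.log 2 := Real.log_nonneg one_le_two
  have hlog1 : Real.log 2 ≤ 1 := by
    have := Real.log_two_lt_d9
    linarith
  have hkey : ((m : ℝ) * Real.log 2) ^ 2 ≤ (m : ℝ) ^ 2 := by
    rw [mul_pow]
    have h : (Real.log 2) ^ 2 ≤ 1 := by nlinarith
    have h2 := mul_le_mul_of_nonneg_left h (sq_nonneg ((m : ℝ)))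
    linarith
  have h2m : 2 * 2 ^ (m - 1) = 2 ^ m := by
    rw [← pow_succ']
    congr 1
    omega
  rw [Nat.card_coe_set_eq]
  have key := Set.ncard_le_ncard_of_injOn
      (s := (↑(Finset.powersetCard r (Finset.range (2 ^ (m - 1) - r * m ^ 2))) : Set (Finset ℕ)))
      (t := Uset r m)
      (gfun r m) ?_ ?_ (Uset_finite r m)
  · simpa [Set.ncard_coe_finset, Finset.card_powersetCard, Finset.card_range] using key
  · intro s hs
    simp only [Finset.mem_coe, Finset.mem_powersetCard] at hs
    obtain ⟨hsub, hcard⟩ := hs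
    rw [gfun_eq hcard]
    have hmem : ∀ i : Fin r, s.orderEmbOfFin hcard i < 2 ^ (m - 1) - r * m ^ 2 := by
      intro i
      exact Finset.mem_range.1 (hsub (Finset.orderEmbOfFin_mem s hcard i))
    have hone : 1 ≤ 2 ^ (m - 1) := Nat.one_le_two_pow
    refine ⟨?_, ?_, ?_, ?_⟩
    · intro i j hij
      dsimp only
      have h1 : s.orderEmbOfFin hcard i < s.orderEmbOfFin hcard j :=
        (s.orderEmbOfFin hcard).strictMono hij
      have h2 : m ^ 2 * (i : ℕ) ≤ m ^ 2 * (j : ℕ) :=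
        Nat.mul_le_mul_left _ (le_of_lt hij)
      omega
    · intro i
      dsimp only
      have h1 : m ^ 2 * (i : ℕ) ≤ m ^ 2 * (r - 1) := Nat.mul_le_mul_left _ (by omega)
      have h2 : m ^ 2 * (r - 1) + m ^ 2 = m ^ 2 * r := by
        rw [← Nat.mul_succ]
        congr 1
        omega
      have h3 : m ^ 2 * r = r * m ^ 2 := Nat.mul_comm _ _
      have h4 := hmem i
      omega
    · intro i hi
      dsimp only
      have h0 : m ^ 2 * (i : ℕ) = 0 := by rw [hi, Nat.mul_zero]
      constructor
      · omega
      · have h5 : (m : ℝ) ^ 2 + 2 ≤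
            ((2 ^ (m - 1) + m ^ 2 + 1 + m ^ 2 * (i : ℕ) + s.orderEmbOfFin hcard i : ℕ) : ℝ) := by
          have : m ^ 2 + 2 ≤ 2 ^ (m - 1) + m ^ 2 + 1 + m ^ 2 * (i : ℕ)
              + s.orderEmbOfFin hcard i := by omega
          exact_mod_cast this
        linarith [hkey]
    · intro i j hij
      dsimp only
      have hlt : i < j := by
        rw [Fin.lt_def]
        omega
      have h1 : s.orderEmbOfFin hcard i < s.orderEmbOfFin hcard j :=
        (s.orderEmbOfFin hcard).strictMono hlt
      have h2 : m ^ 2 * (j : ℕ) = m ^ 2 * (i : ℕ) + m ^ 2 := by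
        rw [← hij, Nat.mul_succ]
      have h3 : (2 ^ (m - 1) + m ^ 2 + 1 + m ^ 2 * (i : ℕ) + s.orderEmbOfFin hcard i)
          + m ^ 2 + 1
          ≤ 2 ^ (m - 1) + m ^ 2 + 1 + m ^ 2 * (j : ℕ) + s.orderEmbOfFin hcard j := by omega
      have h4 : ((2 ^ (m - 1) + m ^ 2 + 1 + m ^ 2 * (i : ℕ) + s.orderEmbOfFin hcard i : ℕ) : ℝ)
          + m ^ 2 + 1
          ≤ ((2 ^ (m - 1) + m ^ 2 + 1 + m ^ 2 * (j : ℕ) + s.orderEmbOfFin hcard j : ℕ) : ℝ) := by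
        exact_mod_cast h3
      linarith [hkey]
  · intro s hs t ht he
    simp only [Finset.mem_coe, Finset.mem_powersetCard] at hs ht
    have hfe : ∀ i : Fin r, s.orderEmbOfFin hs.2 i = t.orderEmbOfFin ht.2 i := by
      intro i
      have := congrFun he i
      rw [gfun_eq hs.2, gfun_eq ht.2] at he
      have h2 := congrFun he i
      omega
    apply Finset.coe_injective
    rw [← Finset.range_orderEmbOfFin s hs.2, ← Finset.range_orderEmbOfFin t ht.2]
    have : ⇑(s.orderEmbOfFin hs.2) = ⇑(t.orderEmbOfFin ht.2) := funext hfe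
    rw [this]

set_option maxHeartbeats 1000000 in
theorem stmt_16 (r : ℕ) (hr : 1 ≤ r) :
    ∀ ε : ℝ, 0 < ε → ∃ M : ℕ, ∀ m ≥ M,
      (1 - ε) * (2 : ℝ) ^ (r * (m - 1)) / (r.factorial : ℝ) ≤ (Nat.card (Uset r m) : ℝ) ∧
      (Nat.card (Uset r m) : ℝ) ≤ (1 + ε) * (2 : ℝ) ^ (r * (m - 1)) / (r.factorial : ℝ) := by
  intro ε hε
  have hr0 : (0 : ℝ) < r := by exact_mod_cast hr
  have hfac0 : (0 : ℝ) < (r.factorial : ℝ) := by exact_mod_cast r.factorial_pos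
  set δ : ℝ := min (ε / r) 1 with hδdef
  have hδpos : 0 < δ := lt_min (div_pos hε hr0) one_pos
  have hδ1 : δ ≤ 1 := min_le_right _ _
  have hrδ : (r : ℝ) * δ ≤ ε := by
    have : δ ≤ ε / r := min_le_left _ _
    calc (r : ℝ) * δ ≤ (r : ℝ) * (ε / r) := by nlinarith
      _ = ε := by field_simp
  -- polynomial vs exponential
  have hlit := isLittleO_pow_const_const_pow_of_one_lt (R := ℝ) 2
      (by norm_num : (1 : ℝ) < |2|)
  have hc : (0 : ℝ) < δ / (8 * r) := by positivity
  have hev := hlit.def hc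
  rw [eventually_atTop] at hev
  obtain ⟨M₁, hM₁⟩ := hev
  refine ⟨max (max M₁ r) 1, fun m hm => ?_⟩
  have hm1 : 1 ≤ m := le_trans (le_max_right _ _) hm
  have hmr : r ≤ m := le_trans (le_max_of_le_left (le_max_right _ _)) hm
  have hmM₁ : M₁ ≤ m := le_trans (le_max_of_le_left (le_max_left _ _)) hm
  have h2m : (2 : ℝ) ^ m = 2 * 2 ^ (m - 1) := by
    rw [← pow_succ']
    congr 1
    omega
  have h2mpos : (0 : ℝ) < 2 ^ (m - 1) := by positivity
  have hm2 : (m : ℝ) ^ 2 ≤ δ / (8 * r) * 2 ^ m := by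
    have h := hM₁ m hmM₁
    simp only [Real.norm_eq_abs, abs_pow, abs_abs, Nat.abs_cast, abs_two] at h
    exact h
  have hm1' : (1 : ℝ) ≤ (m : ℝ) := by exact_mod_cast hm1
  have hrm2 : (r : ℝ) ≤ (m : ℝ) ^ 2 := by
    have h1 : (r : ℝ) ≤ (m : ℝ) := by exact_mod_cast hmr
    nlinarith [h1, hm1']
  have hreal : (r : ℝ) * m ^ 2 + r ≤ δ * 2 ^ (m - 1) := by
    have h1m : (1 : ℝ) ≤ (m : ℝ) ^ 2 := by nlinarith
    have h1 : (r : ℝ) * m ^ 2 + r ≤ 2 * r * (m : ℝ) ^ 2 := by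
      nlinarith [mul_le_mul_of_nonneg_left h1m hr0.le]
    have h2 : 2 * (r : ℝ) * (m : ℝ) ^ 2 ≤ 2 * r * (δ / (8 * r) * 2 ^ m) := by nlinarith
    have h3 : 2 * (r : ℝ) * (δ / (8 * r) * 2 ^ m) = δ / 4 * 2 ^ m := by field_simp; ring
    have h4 : δ / 4 * (2 : ℝ) ^ m = δ / 2 * 2 ^ (m - 1) := by rw [h2m]; ring
    nlinarith [hδpos, h2mpos]
  have hnat : r * m ^ 2 + r ≤ 2 ^ (m - 1) := by
    have hle : ((r * m ^ 2 + r : ℕ) : ℝ) ≤ ((2 ^ (m - 1) : ℕ) : ℝ) := by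
      push_cast
      nlinarith [hreal, hδ1, h2mpos]
    exact_mod_cast hle
  set N' : ℕ := 2 ^ (m - 1) - r * m ^ 2 with hN'
  have e1 : r * m ^ 2 ≤ 2 ^ (m - 1) := by omega
  have hrN' : r ≤ N' + 1 := by omega
  have hpow_eq : (2 : ℝ) ^ (r * (m - 1)) = ((2 : ℝ) ^ (m - 1)) ^ r := by
    rw [Nat.mul_comm, pow_mul]
  constructor
  · -- lower bound
    have hcl := card_lower r m hr hm1 hnat
    have hdf : ((N' + 1 - r : ℕ) : ℝ) ^ r ≤ (N'.descFactorial r : ℝ) := by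
      exact_mod_cast pow_le_descFactorial' N' r
    have hds : (N'.descFactorial r : ℝ) = (r.factorial : ℝ) * (N'.choose r : ℝ) := by
      exact_mod_cast Nat.descFactorial_eq_factorial_mul_choose N' r
    have hc2 : ((N' + 1 - r : ℕ) : ℝ) = ((2 : ℝ) ^ (m - 1) - r * m ^ 2) + 1 - r := by
      rw [Nat.cast_sub hrN']
      push_cast [hN', Nat.cast_sub e1]
      ring
    have hgap : (1 - δ) * 2 ^ (m - 1) ≤ ((N' + 1 - r : ℕ) : ℝ) := by
      rw [hc2]
      nlinarith [hreal]
    have hbase : (0 : ℝ) ≤ (1 - δ) * 2 ^ (m - 1) :=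
      mul_nonneg (by linarith) (le_of_lt h2mpos)
    have hpow : ((1 - δ) * 2 ^ (m - 1)) ^ r ≤ ((N' + 1 - r : ℕ) : ℝ) ^ r :=
      pow_le_pow_left₀ hbase hgap r
    have hbern : 1 - (r : ℝ) * δ ≤ (1 - δ) ^ r := by
      have h := one_add_mul_le_pow (a := -δ) (by linarith : (-2 : ℝ) ≤ -δ) r
      rw [show (1 : ℝ) + -δ = 1 - δ from by ring] at h
      linarith
    have hmain : (1 - ε) * (2 : ℝ) ^ (r * (m - 1)) ≤ (r.factorial : ℝ) * (N'.choose r : ℝ) := by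
      calc (1 - ε) * (2 : ℝ) ^ (r * (m - 1))
          ≤ (1 - δ) ^ r * (2 : ℝ) ^ (r * (m - 1)) := by
            apply mul_le_mul_of_nonneg_right _ (by positivity)
            linarith [hbern, hrδ]
        _ = ((1 - δ) * 2 ^ (m - 1)) ^ r := by rw [hpow_eq, mul_pow]
        _ ≤ ((N' + 1 - r : ℕ) : ℝ) ^ r := hpow
        _ ≤ (N'.descFactorial r : ℝ) := hdf
        _ = (r.factorial : ℝ) * (N'.choose r : ℝ) := hds
    rw [div_le_iff₀ hfac0]
    calc (1 - ε) * (2 : ℝ) ^ (r * (m - 1)) ≤ (r.factorial : ℝ) * (N'.choose r : ℝ) := hmain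
      _ = (N'.choose r : ℝ) * (r.factorial : ℝ) := by ring
      _ ≤ (Nat.card (Uset r m) : ℝ) * (r.factorial : ℝ) := by
          have : (N'.choose r : ℝ) ≤ (Nat.card (Uset r m) : ℝ) := by exact_mod_cast hcl
          nlinarith [hfac0]
  · -- upper bound
    have hcu := card_upper r m hr
    set n : ℕ := 2 ^ m - (2 ^ (m - 1) + m ^ 2) with hn
    have h2mn : (2 : ℕ) ^ m = 2 * 2 ^ (m - 1) := by
      rw [← pow_succ']
      congr 1
      omega
    have hnle : n ≤ 2 ^ (m - 1) := by omega
    have hup_nat : r.factorial * n.choose r ≤ 2 ^ (r * (m - 1)) := by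
      calc r.factorial * n.choose r = n.descFactorial r :=
            (Nat.descFactorial_eq_factorial_mul_choose n r).symm
        _ ≤ n ^ r := n.descFactorial_le_pow r
        _ ≤ (2 ^ (m - 1)) ^ r := Nat.pow_le_pow_left hnle r
        _ = 2 ^ (r * (m - 1)) := by rw [← pow_mul, Nat.mul_comm]
    have hup : (n.choose r : ℝ) * (r.factorial : ℝ) ≤ (2 : ℝ) ^ (r * (m - 1)) := by
      have : ((r.factorial * n.choose r : ℕ) : ℝ) ≤ ((2 ^ (r * (m - 1)) : ℕ) : ℝ) := by
        exact_mod_cast hup_nat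
      push_cast at this
      linarith
    rw [le_div_iff₀ hfac0]
    calc (Nat.card (Uset r m) : ℝ) * (r.factorial : ℝ)
        ≤ (n.choose r : ℝ) * (r.factorial : ℝ) := by
          have : (Nat.card (Uset r m) : ℝ) ≤ (n.choose r : ℝ) := by exact_mod_cast hcu
          nlinarith [hfac0]
      _ ≤ (2 : ℝ) ^ (r * (m - 1)) := hup
      _ ≤ (1 + ε) * (2 : ℝ) ^ (r * (m - 1)) := by nlinarith [pow_pos (by norm_num : (0:ℝ) < 2) (r * (m-1))]
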